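/- If two bounded-degree graphs G and G' on at most N vertices each are (a,b) quasi-isometric, then the ratio of their spectral gaps for simple random walk is bounded above and below by constants depending only on a, b, and the degree bound d. -/

import Mathlib

open Finset SimpleGraph

variable {V : Type*}

/-- The transition matrix of the lazy simple random walk on a finite graph. -/
noncomputable def lazyWalkMatrix [Fintype V] [DecidableEq V]
    (G : SimpleGraph V) [DecidableRel G.Adj] : Matrix V V ℝ := fun u v =>
  if u = v then 1 / 2 else if G.Adj u v then 1 / (2 * (G.degree u)) else 0

/-- `γ` is the spectral gap of the lazy simple random walk on `G`: `1 − γ` is the largest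
eigenvalue of the walk matrix other than `1`. -/
noncomputable def IsLazySpectralGap [Fintype V] [DecidableEq V]
    (G : SimpleGraph V) [DecidableRel G.Adj] (γ : ℝ) : Prop :=
  IsGreatest {θ : ℝ | θ ≠ 1 ∧ ∃ f : V → ℝ, f ≠ 0 ∧
    ∀ v, ∑ u, lazyWalkMatrix G v u * f u = θ * f v} (1 - γ)

/-- `ψ` is an `(a,b)` quasi-isometry between the vertex sets of two graphs, with respect to
their shortest-path metrics. -/
def IsGraphQuasiIsometry {V V' : Type*} (G : SimpleGraph V) (G' : SimpleGraph V')
    (a b : ℝ) (ψ : V → V') : Prop :=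
  (∀ u v : V, a⁻¹ * G.dist u v - b ≤ (G'.dist (ψ u) (ψ v) : ℝ) ∧
      (G'.dist (ψ u) (ψ v) : ℝ) ≤ a * G.dist u v + b) ∧
    ∀ y : V', ∃ x : V, (G'.dist (ψ x) y : ℝ) ≤ a + b

section Basic

variable [Fintype V] [DecidableEq V] (G : SimpleGraph V) [DecidableRel G.Adj]

/-- Dirichlet energy (sum over ordered adjacent pairs). -/
noncomputable def en (f : V → ℝ) : ℝ := ∑ u, ∑ v, if G.Adj u v then (f u - f v)^2 else 0

lemma en_nonneg (f : V → ℝ) : 0 ≤ en G f := by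
  apply Finset.sum_nonneg; intro u _; apply Finset.sum_nonneg; intro v _
  split <;> positivity

lemma en_shift (f : V → ℝ) (c : ℝ) : en G (fun v => f v - c) = en G f := by
  unfold en; congr 1; ext u; congr 1; ext v; congr 1; ring

/-- row of walk matrix applied to f, in neighborFinset form -/
lemma row_apply (f : V → ℝ) (v : V) :
    ∑ u, lazyWalkMatrix G v u * f u
      = (1/2) * f v + ∑ u ∈ G.neighborFinset v, (1 / (2 * (G.degree v : ℝ))) * f u := by
  have h : ∀ u : V, lazyWalkMatrix G v u * f u
      = (if v = u then (1/2) * f u else 0)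
        + (if G.Adj v u then (1 / (2 * (G.degree v : ℝ))) * f u else 0) := by
    intro u
    unfold lazyWalkMatrix
    by_cases h1 : v = u
    · subst h1; simp [G.irrefl]
    · simp only [if_neg h1]
      by_cases h2 : G.Adj v u <;> simp [h2]
  rw [Finset.sum_congr rfl (fun u _ => h u), Finset.sum_add_distrib,
    Finset.sum_ite_eq, if_pos (mem_univ v), SimpleGraph.neighborFinset_eq_filter,
    Finset.sum_filter]

end Basic

set_option linter.unusedSectionVars false

section Basic2

variable [Fintype V] [DecidableEq V] (G : SimpleGraph V) [DecidableRel G.Adj]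

lemma pointwise_quad (f : V → ℝ) (v : V) :
    (G.degree v : ℝ) * (f v * (f v - ∑ u, lazyWalkMatrix G v u * f u))
      = (1/2) * ∑ u ∈ G.neighborFinset v, (f v * (f v - f u)) := by
  rw [row_apply]
  by_cases hd : G.degree v = 0
  · have : G.neighborFinset v = ∅ := by
      rw [← Finset.card_eq_zero, SimpleGraph.card_neighborFinset_eq_degree]; exact hd
    simp [this, hd]
  · have hD : (G.degree v : ℝ) ≠ 0 := Nat.cast_ne_zero.mpr hd
    have hcard : ∑ u ∈ G.neighborFinset v, (f v * (f v - f u))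
        = (G.degree v : ℝ) * (f v)^2 - f v * ∑ u ∈ G.neighborFinset v, f u := by
      rw [Finset.sum_congr rfl (fun u _ => mul_sub (f v) (f v) (f u)),
        Finset.sum_sub_distrib, Finset.sum_const, nsmul_eq_mul,
        SimpleGraph.card_neighborFinset_eq_degree, Finset.mul_sum]
      ring_nf
    rw [hcard, Finset.mul_sum]
    have : ∑ u ∈ G.neighborFinset v, 1 / (2 * (G.degree v : ℝ)) * f u
        = (1 / (2 * (G.degree v : ℝ))) * ∑ u ∈ G.neighborFinset v, f u := by
      rw [Finset.mul_sum]
    rw [this]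
    field_simp
    rw [← Finset.mul_sum]
    ring

lemma quad_id (f : V → ℝ) :
    ∑ v, (G.degree v : ℝ) * (f v * (f v - ∑ u, lazyWalkMatrix G v u * f u))
      = (1/4) * en G f := by
  rw [Finset.sum_congr rfl (fun v _ => pointwise_quad G f v)]
  have h1 : ∀ v, ∑ u ∈ G.neighborFinset v, (f v * (f v - f u))
      = ∑ u, if G.Adj v u then f v * (f v - f u) else 0 := by
    intro v
    rw [SimpleGraph.neighborFinset_eq_filter, Finset.sum_filter]
  simp_rw [h1]
  rw [← Finset.mul_sum]
  have hswap : ∑ v, ∑ u, (if G.Adj v u then f u * (f u - f v) else 0)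
      = ∑ v, ∑ u, (if G.Adj v u then f v * (f v - f u) else 0) := by
    rw [Finset.sum_comm]
    apply Finset.sum_congr rfl; intro v _
    apply Finset.sum_congr rfl; intro u _
    exact if_congr (G.adj_comm u v) rfl rfl
  have hen : en G f = ∑ v, ∑ u, (if G.Adj v u then f v * (f v - f u) else 0)
      + ∑ v, ∑ u, (if G.Adj v u then f u * (f u - f v) else 0) := by
    unfold en
    rw [← Finset.sum_add_distrib]
    apply Finset.sum_congr rfl; intro v _
    rw [← Finset.sum_add_distrib]
    apply Finset.sum_congr rfl; intro u _
    split
    · ring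
    · ring
  rw [hswap, ← two_mul] at hen
  rw [hen]; ring

lemma col_sum (v : V) :
    ∑ u, (G.degree u : ℝ) * lazyWalkMatrix G u v = (G.degree v : ℝ) := by
  have h : ∀ u : V, (G.degree u : ℝ) * lazyWalkMatrix G u v
      = (if u = v then (G.degree v : ℝ)/2 else 0) + (if G.Adj v u then (1/2 : ℝ) else 0) := by
    intro u
    unfold lazyWalkMatrix
    by_cases h1 : u = v
    · subst h1; simp [G.irrefl]; ring
    · rw [if_neg h1, if_neg h1]
      by_cases h2 : G.Adj u v
      · have hd : (G.degree u : ℝ) ≠ 0 := by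
          have := G.degree_pos_iff_exists_adj u |>.mpr ⟨v, h2⟩
          positivity
        rw [if_pos h2, if_pos h2.symm]
        field_simp
        ring
      · rw [if_neg h2, if_neg (fun hh => h2 hh.symm)]
        ring
  rw [Finset.sum_congr rfl (fun u _ => h u), Finset.sum_add_distrib,
    Finset.sum_ite_eq', if_pos (mem_univ v)]
  have : ∑ u, (if G.Adj v u then (1/2 : ℝ) else 0)
      = ∑ u ∈ G.neighborFinset v, (1/2 : ℝ) := by
    rw [SimpleGraph.neighborFinset_eq_filter, Finset.sum_filter]
  rw [this, Finset.sum_const, nsmul_eq_mul, SimpleGraph.card_neighborFinset_eq_degree]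
  ring

lemma mean_preserved (f : V → ℝ) :
    ∑ v, (G.degree v : ℝ) * (∑ u, lazyWalkMatrix G v u * f u)
      = ∑ v, (G.degree v : ℝ) * f v := by
  calc ∑ v, (G.degree v : ℝ) * (∑ u, lazyWalkMatrix G v u * f u)
      = ∑ v, ∑ u, ((G.degree v : ℝ) * lazyWalkMatrix G v u) * f u := by
        apply Finset.sum_congr rfl; intro v _
        rw [Finset.mul_sum]
        apply Finset.sum_congr rfl; intro u _; ring
    _ = ∑ u, ∑ v, ((G.degree v : ℝ) * lazyWalkMatrix G v u) * f u := Finset.sum_comm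
    _ = ∑ u, (∑ v, (G.degree v : ℝ) * lazyWalkMatrix G v u) * f u := by
        apply Finset.sum_congr rfl; intro u _; rw [Finset.sum_mul]
    _ = ∑ u, (G.degree u : ℝ) * f u := by
        apply Finset.sum_congr rfl; intro u _; rw [col_sum]

/-- eigenvalues of the lazy walk matrix lie in [0,1] -/
lemma eig_range {θ : ℝ} {f : V → ℝ} (hf : f ≠ 0)
    (heig : ∀ v, ∑ u, lazyWalkMatrix G v u * f u = θ * f v) : 0 ≤ θ ∧ θ ≤ 1 := by
  have hne : Nonempty V := by
    by_contra h
    exact hf (funext fun v => absurd ⟨v⟩ h)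
  obtain ⟨v₀, -, hv₀⟩ := Finset.exists_max_image (univ : Finset V) (fun v => |f v|)
    ⟨Classical.arbitrary V, mem_univ _⟩
  have hv : ∀ u, |f u| ≤ |f v₀| := fun u => hv₀ u (mem_univ u)
  have hfv₀ : 0 < |f v₀| := by
    rcases (abs_nonneg (f v₀)).lt_or_eq with h | h
    · exact h
    · exfalso; apply hf; funext u
      have := hv u
      rw [← h] at this
      exact abs_eq_zero.mp (le_antisymm this (abs_nonneg _))
  have key : |θ - 1/2| * |f v₀| ≤ (1/2) * |f v₀| := by
    have h1 := heig v₀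
    rw [row_apply] at h1
    have h2 : (θ - 1/2) * f v₀ = ∑ u ∈ G.neighborFinset v₀, 1 / (2 * (G.degree v₀ : ℝ)) * f u := by
      linarith
    rw [← abs_mul, h2]
    calc |∑ u ∈ G.neighborFinset v₀, 1 / (2 * (G.degree v₀ : ℝ)) * f u|
        ≤ ∑ u ∈ G.neighborFinset v₀, |1 / (2 * (G.degree v₀ : ℝ)) * f u| :=
          Finset.abs_sum_le_sum_abs _ _
      _ ≤ ∑ u ∈ G.neighborFinset v₀, (1 / (2 * (G.degree v₀ : ℝ))) * |f v₀| := by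
          apply Finset.sum_le_sum; intro u hu
          rw [abs_mul]
          have h3 : |1 / (2 * (G.degree v₀ : ℝ))| = 1 / (2 * (G.degree v₀ : ℝ)) := by
            apply abs_of_nonneg; positivity
          rw [h3]
          exact mul_le_mul_of_nonneg_left (hv u) (by positivity)
      _ ≤ (1/2) * |f v₀| := by
          rw [Finset.sum_const, nsmul_eq_mul, SimpleGraph.card_neighborFinset_eq_degree]
          by_cases hd : G.degree v₀ = 0
          · simp [hd]
          · have hDD : (G.degree v₀ : ℝ) ≠ 0 := Nat.cast_ne_zero.mpr hd
            have hkey : (G.degree v₀ : ℝ) * (1 / (2 * (G.degree v₀ : ℝ))) = 1/2 := by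
              field_simp
            rw [← mul_assoc, hkey]
  have habs : |θ - 1/2| ≤ 1/2 := le_of_mul_le_mul_right (by linarith) hfv₀
  have := abs_le.mp habs
  constructor <;> linarith [this.1, this.2]

/-- maximum principle: a fixed vector of the lazy walk on a connected graph is constant -/
lemma fixed_const (hconn : G.Connected) {f : V → ℝ}
    (heig : ∀ v, ∑ u, lazyWalkMatrix G v u * f u = f v) : ∀ u v, f u = f v := by
  haveI hne : Nonempty V := hconn.nonempty
  obtain ⟨vm, -, hvm⟩ := Finset.exists_max_image (univ : Finset V) f
    ⟨Classical.arbitrary V, mem_univ _⟩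
  have hmax : ∀ u, f u ≤ f vm := fun u => hvm u (mem_univ u)
  have step : ∀ x y, f x = f vm → G.Adj x y → f y = f vm := by
    intro x y hx hxy
    have hd : 0 < G.degree x := G.degree_pos_iff_exists_adj x |>.mpr ⟨y, hxy⟩
    have hD : (G.degree x : ℝ) ≠ 0 := by positivity
    have h1 := heig x
    rw [row_apply] at h1
    have h2 : ∑ u ∈ G.neighborFinset x, f u = (G.degree x : ℝ) * f x := by
      have h3 : (1 / (2 * (G.degree x : ℝ))) * ∑ u ∈ G.neighborFinset x, f u = (1/2) * f x := by
        rw [← Finset.mul_sum] at h1; linarith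
      have := mul_left_cancel₀ (a := 1 / (2 * (G.degree x : ℝ))) (by positivity)
        (b := ∑ u ∈ G.neighborFinset x, f u) (c := (G.degree x : ℝ) * f x) ?_
      · exact this
      · rw [h3]; field_simp
    have h4 : ∑ u ∈ G.neighborFinset x, (f x - f u) = 0 := by
      rw [Finset.sum_sub_distrib, Finset.sum_const, nsmul_eq_mul,
        SimpleGraph.card_neighborFinset_eq_degree, h2]
      ring
    have h5 := (Finset.sum_eq_zero_iff_of_nonneg
      (fun u hu => by
        have : f u ≤ f x := hx ▸ hmax u
        linarith)).mp h4 y (by rwa [SimpleGraph.mem_neighborFinset])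
    have : f y = f x := by linarith [sub_eq_zero.mp h5]
    rw [this, hx]
  have hwalk : ∀ (x z : V) (p : G.Walk x z), f x = f vm → f z = f vm := by
    intro x z p
    induction p with
    | nil => exact fun h => h
    | cons h p ih => exact fun hx => ih (step _ _ hx h)
  have hall : ∀ v, f v = f vm := fun v => hwalk vm v (hconn vm v).some rfl
  intro u v; rw [hall u, hall v]

end Basic2

section Gap

variable [Fintype V] [DecidableEq V] (G : SimpleGraph V) [DecidableRel G.Adj]

lemma gap_nonempty {γ : ℝ} (hγ : IsLazySpectralGap G γ) : Nonempty V := by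
  obtain ⟨⟨-, f, hf0, -⟩, -⟩ := hγ
  by_contra h
  exact hf0 (funext fun v => absurd ⟨v⟩ h)

lemma gap_pos_le_one {γ : ℝ} (hγ : IsLazySpectralGap G γ) : 0 < γ ∧ γ ≤ 1 := by
  obtain ⟨⟨hne1, f, hf0, heig⟩, -⟩ := hγ
  obtain ⟨h0, h1⟩ := eig_range G hf0 heig
  have : γ ≠ 0 := fun h => hne1 (by rw [h]; ring)
  constructor
  · rcases lt_or_ge 0 γ with h | h
    · exact h
    · exact absurd (le_antisymm h (by linarith)) this
  · linarith

lemma gap_eigen {γ : ℝ} (hγ : IsLazySpectralGap G γ) :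
    ∃ f : V → ℝ, f ≠ 0 ∧
      (∀ v, ∑ u, lazyWalkMatrix G v u * f u = (1 - γ) * f v) ∧
      (∑ v, (G.degree v : ℝ) * f v = 0) ∧
      (1/4) * en G f = γ * ∑ v, (G.degree v : ℝ) * (f v)^2 := by
  have hγpos := (gap_pos_le_one G hγ).1
  obtain ⟨⟨hne1, f, hf0, heig⟩, -⟩ := hγ
  refine ⟨f, hf0, heig, ?_, ?_⟩
  · have h1 := mean_preserved G f
    rw [Finset.sum_congr rfl (fun v _ => by rw [heig v])] at h1
    have h2 : ∑ v, (G.degree v : ℝ) * ((1 - γ) * f v)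
        = (1 - γ) * ∑ v, (G.degree v : ℝ) * f v := by
      rw [Finset.mul_sum]
      apply Finset.sum_congr rfl; intro v _; ring
    rw [h2] at h1
    have h3 : γ * ∑ v, (G.degree v : ℝ) * f v = 0 := by linarith
    exact (mul_eq_zero.mp h3).resolve_left (ne_of_gt hγpos)
  · have h1 := quad_id G f
    rw [Finset.sum_congr rfl (fun v _ => by rw [heig v])] at h1
    rw [← h1, Finset.mul_sum]
    apply Finset.sum_congr rfl; intro v _; ring

end Gap

section Rayleigh

variable [Fintype V] [DecidableEq V] (G : SimpleGraph V) [DecidableRel G.Adj]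

open scoped RealInnerProductSpace

/-- The fundamental variational inequality: the spectral gap bounds the Rayleigh quotient
of any mean-zero function. -/
lemma rayleigh_bound (hconn : G.Connected) {γ : ℝ} (hγ : IsLazySpectralGap G γ)
    (hdeg : ∀ v : V, 0 < G.degree v) (g : V → ℝ)
    (hmean : ∑ v, (G.degree v : ℝ) * g v = 0) :
    γ * ∑ v, (G.degree v : ℝ) * (g v)^2 ≤ (1/4) * en G g := by
  classical
  haveI hne : Nonempty V := hconn.nonempty
  set dR : V → ℝ := fun v => (G.degree v : ℝ) with hdR
  have hdpos : ∀ v, 0 < dR v := fun v => by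
    simp only [hdR]; exact_mod_cast hdeg v
  have hsq_pos : ∀ v, 0 < Real.sqrt (dR v) := fun v => Real.sqrt_pos.mpr (hdpos v)
  have hsqsq : ∀ v, Real.sqrt (dR v) * Real.sqrt (dR v) = dR v :=
    fun v => Real.mul_self_sqrt (hdpos v).le
  -- the symmetrized matrix
  set N : Matrix V V ℝ :=
      fun u v => Real.sqrt (dR u) * lazyWalkMatrix G u v / Real.sqrt (dR v) with hN
  have hNsym : N.IsHermitian := by
    unfold Matrix.IsHermitian
    ext u v
    simp only [Matrix.conjTranspose_apply, star_trivial]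
    simp only [hN]
    unfold lazyWalkMatrix
    by_cases h1 : u = v
    · subst h1; simp
    · rw [if_neg h1, if_neg (fun h => h1 h.symm)]
      by_cases h2 : G.Adj u v
      · rw [if_pos h2.symm, if_pos h2]
        have h3 := hsqsq u; have h4 := hsqsq v
        have h5 := (hsq_pos u).ne'; have h6 := (hsq_pos v).ne'
        have h7 := (hdpos u).ne'; have h8 := (hdpos v).ne'
        field_simp
        have e1 : Real.sqrt (dR u) ^ 2 = (G.degree u : ℝ) := by rw [Real.sq_sqrt (hdpos u).le]
        have e2 : Real.sqrt (dR v) ^ 2 = (G.degree v : ℝ) := by rw [Real.sq_sqrt (hdpos v).le]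
        rw [e1, e2, div_self (show (G.degree v : ℝ) ≠ 0 from h8),
          div_self (show (G.degree u : ℝ) ≠ 0 from h7)]
      · rw [if_neg (fun h => h2 h.symm), if_neg h2]; simp
  set L := Matrix.toEuclideanLin N with hL
  have hLapp : ∀ (x : EuclideanSpace ℝ V) (v : V), L x v = ∑ u, N v u * x u := by
    intro x v
    rw [hL, Matrix.toEuclideanLin_apply]
    rfl
  have hLsym : L.IsSymmetric := by
    rw [hL, ← Matrix.isHermitian_iff_isSymmetric]
    exact hNsym
  -- the Perron vector
  set sq : EuclideanSpace ℝ V := WithLp.toLp 2 (fun v => Real.sqrt (dR v) : V → ℝ) with hsqdef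
  have hrowsum : ∀ v, ∑ u, lazyWalkMatrix G v u * (1:ℝ) = 1 := by
    intro v
    rw [row_apply G (fun _ => (1:ℝ)) v, Finset.sum_const, nsmul_eq_mul,
      SimpleGraph.card_neighborFinset_eq_degree]
    have h7 : dR v ≠ 0 := (hdpos v).ne'
    rw [hdR] at h7
    simp only at h7
    field_simp
    ring
  have hNentry : ∀ v u (t : ℝ), N v u * (Real.sqrt (dR u) * t)
      = Real.sqrt (dR v) * (lazyWalkMatrix G v u * t) := by
    intro v u t
    rw [hN]
    have h5 := (hsq_pos u).ne'
    field_simp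
  have hLsq : L sq = sq := by
    ext v
    rw [hLapp]
    have : ∀ u, N v u * sq u = Real.sqrt (dR v) * (lazyWalkMatrix G v u * 1) := by
      intro u
      have := hNentry v u 1
      rw [mul_one] at this
      exact this
    rw [Finset.sum_congr rfl (fun u _ => this u), ← Finset.mul_sum]
    rw [hrowsum v, mul_one]
  set W := (ℝ ∙ sq)ᗮ with hW
  have hinv : ∀ x ∈ W, L x ∈ W := by
    intro x hx
    rw [hW, Submodule.mem_orthogonal_singleton_iff_inner_right] at hx ⊢
    calc ⟪sq, L x⟫ = ⟪L sq, x⟫ := (hLsym sq x).symm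
      _ = ⟪sq, x⟫ := by rw [hLsq]
      _ = 0 := hx
  set T := L.restrict hinv with hT
  have hTsym : T.IsSymmetric := by
    intro x y
    have : ∀ (z w : W), ⟪z, w⟫ = ⟪(z : EuclideanSpace ℝ V), (w : EuclideanSpace ℝ V)⟫ :=
      fun z w => rfl
    rw [hT]
    show ⟪(L x : EuclideanSpace ℝ V), (y : EuclideanSpace ℝ V)⟫
        = ⟪(x : EuclideanSpace ℝ V), (L y : EuclideanSpace ℝ V)⟫
    exact hLsym x y
  -- main quadratic form bound on W
  have Hmain : ∀ x : EuclideanSpace ℝ V, x ∈ W → ⟪x, L x⟫ ≤ (1 - γ) * ⟪x, x⟫ := by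
    by_cases htriv : ∀ x ∈ W, x = (0 : EuclideanSpace ℝ V)
    · intro x hx
      rw [htriv x hx]
      simp
    · push_neg at htriv
      obtain ⟨y₀, hy₀W, hy₀ne⟩ := htriv
      haveI : Nontrivial W := ⟨⟨⟨y₀, hy₀W⟩, 0, by simp [Subtype.ext_iff, hy₀ne]⟩⟩
      set T' : W →L[ℝ] W := (hTsym.toSelfAdjoint : W →L[ℝ] W) with hT'
      have hsph : (Metric.sphere (0 : W) 1).Nonempty := by
        refine ⟨(‖(⟨y₀, hy₀W⟩ : W)‖⁻¹ : ℝ) • ⟨y₀, hy₀W⟩, ?_⟩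
        have hn : ‖(⟨y₀, hy₀W⟩ : W)‖ ≠ 0 := by
          simp only [ne_eq, norm_eq_zero]
          intro h
          exact hy₀ne (congrArg Subtype.val h)
        rw [mem_sphere_zero_iff_norm, norm_smul, norm_inv, norm_norm,
          inv_mul_cancel₀ hn]
      obtain ⟨x₀, hx₀mem, hmax⟩ := (isCompact_sphere (0 : W) 1).exists_isMaxOn hsph
        (T'.reApplyInnerSelf_continuous.continuousOn)
      have hx₀norm : ‖x₀‖ = 1 := by rwa [mem_sphere_zero_iff_norm] at hx₀mem
      have hx₀ne : x₀ ≠ 0 := by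
        intro h; rw [h] at hx₀norm; simp at hx₀norm
      have hmax' : IsMaxOn T'.reApplyInnerSelf (Metric.sphere 0 ‖x₀‖) x₀ := by
        rwa [hx₀norm]
      have hev : Module.End.HasEigenvector (T' : W →ₗ[ℝ] W) ((T'.rayleighQuotient x₀ : ℝ)) x₀ :=
        hTsym.toSelfAdjoint.prop.hasEigenvector_of_isLocalExtrOn hx₀ne (Or.inr hmax'.localize)
      set μ : ℝ := T'.rayleighQuotient x₀ with hμdef
      have hre : ∀ z : W, T'.reApplyInnerSelf z = ⟪(T z : EuclideanSpace ℝ V), (z : EuclideanSpace ℝ V)⟫ := by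
        intro z
        rw [ContinuousLinearMap.reApplyInnerSelf_apply]
        rfl
      have hμval : T'.reApplyInnerSelf x₀ = μ := by
        rw [hμdef]
        unfold ContinuousLinearMap.rayleighQuotient
        rw [hx₀norm]
        norm_num
      have hquot : ∀ z : W, ⟪(T z : EuclideanSpace ℝ V), (z : EuclideanSpace ℝ V)⟫
          ≤ μ * ‖z‖^2 := by
        intro z
        by_cases hz : z = (0 : W)
        · subst hz
          simp
        · have hzn : ‖z‖ ≠ 0 := norm_ne_zero_iff.mpr hz
          have hzpos : 0 < ‖z‖ := norm_pos_iff.mpr hz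
          have hy : ((‖z‖⁻¹ : ℝ) • z) ∈ Metric.sphere (0 : W) ‖x₀‖ := by
            rw [hx₀norm, mem_sphere_zero_iff_norm, norm_smul, norm_inv, norm_norm,
              inv_mul_cancel₀ hzn]
          have hb : T'.reApplyInnerSelf ((‖z‖⁻¹ : ℝ) • z) ≤ T'.reApplyInnerSelf x₀ := hmax' hy
          rw [T'.reApplyInnerSelf_smul, hμval] at hb
          rw [hre] at hb
          have hnorm : ‖(‖z‖⁻¹ : ℝ)‖^2 = (‖z‖⁻¹)^2 := by
            rw [norm_inv, norm_norm]
          rw [hnorm] at hb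
          have key : (‖z‖⁻¹)^2 * ⟪(T z : EuclideanSpace ℝ V), (z : EuclideanSpace ℝ V)⟫ ≤ μ := hb
          have h2 : ‖z‖^2 * ((‖z‖⁻¹)^2 * ⟪(T z : EuclideanSpace ℝ V), (z : EuclideanSpace ℝ V)⟫)
              ≤ ‖z‖^2 * μ := by
            apply mul_le_mul_of_nonneg_left key (sq_nonneg _)
          have h3 : ‖z‖^2 * (‖z‖⁻¹)^2 = 1 := by
            rw [← mul_pow, mul_inv_cancel₀ hzn, one_pow]
          calc ⟪(T z : EuclideanSpace ℝ V), (z : EuclideanSpace ℝ V)⟫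
              = ‖z‖^2 * (‖z‖⁻¹)^2 * ⟪(T z : EuclideanSpace ℝ V), (z : EuclideanSpace ℝ V)⟫ := by
                rw [h3, one_mul]
            _ = ‖z‖^2 * ((‖z‖⁻¹)^2 * ⟪(T z : EuclideanSpace ℝ V), (z : EuclideanSpace ℝ V)⟫) := by
                ring
            _ ≤ ‖z‖^2 * μ := h2
            _ = μ * ‖z‖^2 := by ring
      -- the eigenvector downstairs
      have hTx₀ : T x₀ = μ • x₀ := by
        have h1 := Module.End.mem_eigenspace_iff.mp hev.1
        exact h1
      set w : EuclideanSpace ℝ V := (x₀ : EuclideanSpace ℝ V) with hwdef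
      have hwne : w ≠ 0 := by
        intro h
        exact hx₀ne (Subtype.ext h)
      have hLw : ∀ v, L w v = μ * w v := by
        intro v
        have h1 : L w = (T x₀ : EuclideanSpace ℝ V) := rfl
        rw [h1, hTx₀]
        rfl
      set fv : V → ℝ := fun v => w v / Real.sqrt (dR v) with hfvdef
      have hwfv : ∀ v, w v = Real.sqrt (dR v) * fv v := by
        intro v
        rw [hfvdef]
        simp only
        rw [eq_comm, mul_comm]
        exact div_mul_cancel₀ (w v) (hsq_pos v).ne' 
      have heigM : ∀ v, ∑ u, lazyWalkMatrix G v u * fv u = μ * fv v := by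
        intro v
        have h1 : ∑ u, N v u * w u = μ * w v := by
          rw [← hLapp, hLw]
        have h2 : ∀ u, N v u * w u = Real.sqrt (dR v) * (lazyWalkMatrix G v u * fv u) := by
          intro u
          rw [hwfv u]
          exact hNentry v u (fv u)
        rw [Finset.sum_congr rfl (fun u _ => h2 u), ← Finset.mul_sum, hwfv v] at h1
        have h4 : Real.sqrt (dR v) * (∑ u, lazyWalkMatrix G v u * fv u)
            = Real.sqrt (dR v) * (μ * fv v) := by rw [h1]; ring
        exact mul_left_cancel₀ (hsq_pos v).ne' h4
      have hfvne : fv ≠ 0 := by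
        intro h
        apply hwne
        ext v
        have : fv v = 0 := by rw [h]; rfl
        rw [hwfv v, this, mul_zero]
        rfl
      have hμne1 : μ ≠ 1 := by
        intro h1
        have heq : ∀ v, ∑ u, lazyWalkMatrix G v u * fv u = fv v := by
          intro v; rw [heigM v, h1, one_mul]
        have hconst := fixed_const G hconn heq
        have v₁ : V := Classical.arbitrary V
        have horth : ∑ v, sq v * w v = 0 :=
          by have h := Submodule.mem_orthogonal_singleton_iff_inner_right.mp x₀.2
             simpa [PiLp.inner_apply, hwdef, mul_comm] using h
        have hval : ∑ v, sq v * w v = fv v₁ * ∑ v, dR v := by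
          rw [Finset.mul_sum]
          apply Finset.sum_congr rfl; intro v _
          rw [hwfv v, hconst v v₁]
          show Real.sqrt (dR v) * (Real.sqrt (dR v) * fv v₁) = fv v₁ * dR v
          rw [← mul_assoc, hsqsq]; ring
        have hsum_pos : 0 < ∑ v, dR v :=
          Finset.sum_pos (fun v _ => hdpos v) univ_nonempty
        rw [hval] at horth
        have hfv₁ : fv v₁ = 0 := by
          rcases mul_eq_zero.mp horth with h | h
          · exact h
          · exact absurd h hsum_pos.ne'
        apply hfvne
        funext v
        rw [hconst v v₁, hfv₁]
        simp
      have hμle : μ ≤ 1 - γ := hγ.2 ⟨hμne1, fv, hfvne, heigM⟩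
      intro x hx
      have h1 : ⟪x, L x⟫ = ⟪(L x : EuclideanSpace ℝ V), x⟫ := real_inner_comm _ _
      have h2 : (L x : EuclideanSpace ℝ V) = ((T ⟨x, hx⟩ : W) : EuclideanSpace ℝ V) := rfl
      have h3 : ‖(⟨x, hx⟩ : W)‖ = ‖x‖ := rfl
      calc ⟪x, L x⟫ = ⟪((T ⟨x, hx⟩ : W) : EuclideanSpace ℝ V), x⟫ := by rw [h1, h2]
        _ ≤ μ * ‖(⟨x, hx⟩ : W)‖^2 := hquot ⟨x, hx⟩
        _ ≤ (1 - γ) * ‖x‖^2 := by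
            rw [h3]
            apply mul_le_mul_of_nonneg_right hμle (sq_nonneg _)
        _ = (1 - γ) * ⟪x, x⟫ := by rw [real_inner_self_eq_norm_sq]
  -- apply to the vector √d * g
  set h : EuclideanSpace ℝ V := WithLp.toLp 2 (fun v => Real.sqrt (dR v) * g v : V → ℝ) with hhdef
  have hhW : h ∈ W := by
    rw [hW, Submodule.mem_orthogonal_singleton_iff_inner_right]
    rw [real_inner_comm]
    show ∑ v, sq v * h v = 0
    calc ∑ v, sq v * h v = ∑ v, dR v * g v := by
          apply Finset.sum_congr rfl; intro v _
          show Real.sqrt (dR v) * (Real.sqrt (dR v) * g v) = dR v * g v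
          rw [← mul_assoc, hsqsq]
      _ = 0 := hmean
  have hinner1 : ⟪h, h⟫ = ∑ v, dR v * (g v)^2 := by
    show ∑ v, h v * h v = _
    apply Finset.sum_congr rfl; intro v _
    show (Real.sqrt (dR v) * g v) * (Real.sqrt (dR v) * g v) = dR v * (g v)^2
    nlinarith [hsqsq v]
  have hinner2 : ⟪h, L h⟫ = ∑ v, dR v * (g v * (∑ u, lazyWalkMatrix G v u * g u)) := by
    rw [real_inner_comm]
    show ∑ v, h v * L h v = _
    apply Finset.sum_congr rfl; intro v _
    rw [hLapp]
    have : ∀ u, N v u * h u = Real.sqrt (dR v) * (lazyWalkMatrix G v u * g u) := by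
      intro u
      exact hNentry v u (g u)
    rw [Finset.sum_congr rfl (fun u _ => this u), ← Finset.mul_sum]
    show (Real.sqrt (dR v) * g v) * (Real.sqrt (dR v) * _) = _
    rw [← mul_assoc]
    rw [show Real.sqrt (dR v) * g v * Real.sqrt (dR v)
      = (Real.sqrt (dR v) * Real.sqrt (dR v)) * g v by ring, hsqsq]
    ring
  have hq := quad_id G g
  have hbound := Hmain h hhW
  rw [hinner1, hinner2] at hbound
  have hexpand : ∑ v, dR v * (g v * (g v - ∑ u, lazyWalkMatrix G v u * g u))
      = ∑ v, dR v * (g v)^2 - ∑ v, dR v * (g v * (∑ u, lazyWalkMatrix G v u * g u)) := by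
    rw [← Finset.sum_sub_distrib]
    apply Finset.sum_congr rfl; intro v _; ring
  rw [hdR] at hexpand
  rw [hexpand] at hq
  have : ∑ v, dR v * (g v)^2 = ∑ v, (G.degree v : ℝ) * (g v)^2 := rfl
  rw [this] at hbound
  linarith [hq, hbound]

end Rayleigh

section Counting

variable [Fintype V] [DecidableEq V] (G : SimpleGraph V) [DecidableRel G.Adj]

lemma dist_getVert_le (hconn : G.Connected) {x y : V} (p : G.Walk x y) (i : ℕ) :
    G.dist x (p.getVert i) ≤ i := by
  induction i with
  | zero => rw [SimpleGraph.Walk.getVert_zero, SimpleGraph.dist_self]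
  | succ i ih =>
    rcases lt_or_ge i p.length with h | h
    · have hadj := p.adj_getVert_succ h
      calc G.dist x (p.getVert (i+1))
          ≤ G.dist x (p.getVert i) + G.dist (p.getVert i) (p.getVert (i+1)) :=
            hconn.dist_triangle
        _ ≤ i + 1 := by
            have : G.dist (p.getVert i) (p.getVert (i+1)) = 1 :=
              SimpleGraph.dist_eq_one_iff_adj.mpr hadj
            omega
    · rw [p.getVert_of_length_le (le_trans h (Nat.le_succ i)),
        ← p.getVert_of_length_le h]
      omega

lemma telescope_sq (f : V → ℝ) {x y : V} (p : G.Walk x y) :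
    (f x - f y)^2
      ≤ (p.length : ℝ) * ∑ i ∈ Finset.range p.length,
          (f (p.getVert i) - f (p.getVert (i+1)))^2 := by
  have h1 : f y - f x
      = ∑ i ∈ Finset.range p.length, (f (p.getVert (i+1)) - f (p.getVert i)) := by
    rw [Finset.sum_range_sub (fun i => f (p.getVert i)), p.getVert_length, p.getVert_zero]
  have h2 : (f x - f y)^2 = (f y - f x)^2 := by ring
  rw [h2, h1]
  have h3 := sq_sum_le_card_mul_sum_sq
    (s := Finset.range p.length) (f := fun i => f (p.getVert (i+1)) - f (p.getVert i))
  rw [Finset.card_range] at h3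
  calc (∑ i ∈ Finset.range p.length, (f (p.getVert (i+1)) - f (p.getVert i)))^2
      ≤ (p.length : ℝ) * ∑ i ∈ Finset.range p.length,
          (f (p.getVert (i+1)) - f (p.getVert i))^2 := h3
    _ = (p.length : ℝ) * ∑ i ∈ Finset.range p.length,
          (f (p.getVert i) - f (p.getVert (i+1)))^2 := by
        congr 1
        apply Finset.sum_congr rfl; intro i _; ring

lemma ball_card (hconn : G.Connected) (d : ℕ) (hdeg : ∀ v, G.degree v ≤ d) (u : V) (r : ℕ) :
    (univ.filter (fun v => G.dist u v ≤ r)).card ≤ (d+1)^r := by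
  induction r with
  | zero =>
    have hsub : univ.filter (fun v => G.dist u v ≤ 0) ⊆ {u} := by
      intro v hv
      rw [Finset.mem_filter] at hv
      have : G.dist u v = 0 := Nat.le_zero.mp hv.2
      rw [Finset.mem_singleton]
      exact ((hconn.dist_eq_zero_iff).mp this).symm
    simpa using Finset.card_le_card hsub
  | succ r ih =>
    have hsub : univ.filter (fun v => G.dist u v ≤ r + 1)
        ⊆ (univ.filter (fun v => G.dist u v ≤ r)).biUnion
            (fun x => insert x (G.neighborFinset x)) := by
      intro v hv
      rw [Finset.mem_filter] at hv
      rcases le_or_gt (G.dist u v) r with h | h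
      · apply Finset.mem_biUnion.mpr
        exact ⟨v, Finset.mem_filter.mpr ⟨mem_univ v, h⟩, Finset.mem_insert_self v _⟩
      · have hd : G.dist u v = r + 1 := le_antisymm hv.2 h
        obtain ⟨p, hp⟩ := hconn.exists_walk_length_eq_dist u v
        apply Finset.mem_biUnion.mpr
        refine ⟨p.getVert r, Finset.mem_filter.mpr ⟨mem_univ _, dist_getVert_le G hconn p r⟩, ?_⟩
        apply Finset.mem_insert.mpr
        right
        rw [SimpleGraph.mem_neighborFinset]
        have hr : r < p.length := by omega
        have := p.adj_getVert_succ hr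
        rwa [show r + 1 = p.length by omega, p.getVert_length] at this
    calc (univ.filter (fun v => G.dist u v ≤ r + 1)).card
        ≤ ((univ.filter (fun v => G.dist u v ≤ r)).biUnion
            (fun x => insert x (G.neighborFinset x))).card := Finset.card_le_card hsub
      _ ≤ ∑ x ∈ univ.filter (fun v => G.dist u v ≤ r), (insert x (G.neighborFinset x)).card :=
          Finset.card_biUnion_le
      _ ≤ ∑ _x ∈ univ.filter (fun v => G.dist u v ≤ r), (d+1) := by
          apply Finset.sum_le_sum
          intro x _
          calc (insert x (G.neighborFinset x)).card
              ≤ (G.neighborFinset x).card + 1 := Finset.card_insert_le _ _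
            _ ≤ d + 1 := by
                have := hdeg x
                rw [SimpleGraph.card_neighborFinset_eq_degree]
                omega
      _ = (univ.filter (fun v => G.dist u v ≤ r)).card * (d+1) := by
          rw [Finset.sum_const, smul_eq_mul]
      _ ≤ (d+1)^r * (d+1) := Nat.mul_le_mul_right _ ih
      _ = (d+1)^(r+1) := by ring

end Counting

lemma comp_sum_le {α β : Type*} [Fintype α] [Fintype β] [DecidableEq β]
    (φ : α → β) (h : β → ℝ) (hh : ∀ x, 0 ≤ h x) (F : ℕ)
    (hfib : ∀ x : β, (univ.filter (fun y => φ y = x)).card ≤ F) :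
    ∑ y, h (φ y) ≤ (F : ℝ) * ∑ x, h x := by
  have h1 : ∑ x : β, ∑ y ∈ univ.filter (fun y => φ y = x), h (φ y) = ∑ y : α, h (φ y) := by
    have := Finset.sum_fiberwise_eq_sum_filter univ univ φ (fun y => h (φ y))
    simpa using this
  rw [← h1, Finset.mul_sum]
  apply Finset.sum_le_sum
  intro x _
  have h2 : ∑ y ∈ univ.filter (fun y => φ y = x), h (φ y)
      = ((univ.filter (fun y => φ y = x)).card : ℝ) * h x := by
    rw [Finset.sum_congr rfl (fun y hy => by rw [(Finset.mem_filter.mp hy).2]),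
      Finset.sum_const, nsmul_eq_mul]
  rw [h2]
  exact mul_le_mul_of_nonneg_right (by exact_mod_cast hfib x) (hh x)

/-- Generic path-counting lemma: a family of short walks with bounded congestion
has total energy bounded by the graph energy. -/
lemma path_counting {ι : Type*} [Fintype ι] {V' : Type*} [Fintype V'] [DecidableEq V']
    (G' : SimpleGraph V') [DecidableRel G'.Adj] (f' : V' → ℝ)
    (L F : ℕ) (n : ι → ℕ) (st : ι → ℕ → V')
    (hn : ∀ k, n k ≤ L)
    (hadj : ∀ k i, i < n k → G'.Adj (st k i) (st k (i+1)))
    (hdist : ∀ k i, i ≤ n k → G'.dist (st k 0) (st k i) ≤ L)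
    (hfib : ∀ x : V',
      (univ.filter (fun k => n k ≠ 0 ∧ G'.dist (st k 0) x ≤ L)).card ≤ F) :
    ∑ k, ∑ i ∈ Finset.range (n k), (f' (st k i) - f' (st k (i+1)))^2
      ≤ (L : ℝ) * F * en G' f' := by
  classical
  have expand : ∀ k, ∀ i ∈ Finset.range (n k),
      (f' (st k i) - f' (st k (i+1)))^2
        = ∑ x, ∑ y, (if st k i = x then (if st k (i+1) = y then (f' x - f' y)^2 else 0) else 0) := by
    intro k i _
    symm
    have e1 : ∀ x : V', (∑ y, if st k i = x then (if st k (i+1) = y then (f' x - f' y)^2 else 0) else 0)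
        = (if st k i = x then (f' x - f' (st k (i+1)))^2 else 0) := by
      intro x
      by_cases h1 : st k i = x
      · simp only [if_pos h1, Finset.sum_ite_eq, Finset.mem_univ, if_true]
      · simp only [if_neg h1, Finset.sum_const_zero]
    rw [Finset.sum_congr rfl (fun x (_ : x ∈ univ) => e1 x), Finset.sum_ite_eq,
      if_pos (mem_univ _)]
  calc ∑ k, ∑ i ∈ Finset.range (n k), (f' (st k i) - f' (st k (i+1)))^2
      = ∑ k, ∑ i ∈ Finset.range (n k), ∑ x, ∑ y,
          (if st k i = x then (if st k (i+1) = y then (f' x - f' y)^2 else 0) else 0) := by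
        apply Finset.sum_congr rfl; intro k _
        exact Finset.sum_congr rfl (expand k)
    _ = ∑ x, ∑ y, ∑ k, ∑ i ∈ Finset.range (n k),
          (if st k i = x then (if st k (i+1) = y then (f' x - f' y)^2 else 0) else 0) := by
        have swap1 : ∀ k : ι, ∑ i ∈ Finset.range (n k), ∑ x, ∑ y,
            (if st k i = x then (if st k (i+1) = y then (f' x - f' y)^2 else 0) else 0)
            = ∑ x, ∑ y, ∑ i ∈ Finset.range (n k),
            (if st k i = x then (if st k (i+1) = y then (f' x - f' y)^2 else 0) else 0) := by
          intro k
          rw [Finset.sum_comm]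
          apply Finset.sum_congr rfl; intro x _
          rw [Finset.sum_comm]
        rw [Finset.sum_congr rfl (fun k (_ : k ∈ univ) => swap1 k), Finset.sum_comm]
        apply Finset.sum_congr rfl; intro x _
        rw [Finset.sum_comm]
    _ ≤ ∑ x, ∑ y, (if G'.Adj x y then (f' x - f' y)^2 else 0) * ((L : ℝ) * F) := by
        apply Finset.sum_le_sum; intro x _
        apply Finset.sum_le_sum; intro y _
        by_cases hex : ∃ k, ∃ i ∈ Finset.range (n k), st k i = x ∧ st k (i+1) = y
        · obtain ⟨k₀, i₀, hi₀, hx₀, hy₀⟩ := hex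
          have hadj₀ : G'.Adj x y := by
            rw [← hx₀, ← hy₀]
            exact hadj k₀ i₀ (Finset.mem_range.mp hi₀)
          rw [if_pos hadj₀]
          have hterm : ∀ k, ∀ i ∈ Finset.range (n k),
              (if st k i = x then (if st k (i+1) = y then (f' x - f' y)^2 else 0) else 0)
                = (f' x - f' y)^2 * (if st k i = x ∧ st k (i+1) = y then 1 else 0) := by
            intro k i _
            by_cases h1 : st k i = x <;> by_cases h2 : st k (i+1) = y <;>
              simp [h1, h2]
          rw [Finset.sum_congr rfl (fun k _ => Finset.sum_congr rfl (hterm k))]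
          have hcount : ∑ k, ∑ i ∈ Finset.range (n k),
              (if st k i = x ∧ st k (i+1) = y then (1:ℝ) else 0) ≤ (L : ℝ) * F := by
            have hk : ∀ k, ∑ i ∈ Finset.range (n k),
                (if st k i = x ∧ st k (i+1) = y then (1:ℝ) else 0)
                  ≤ (if n k ≠ 0 ∧ G'.dist (st k 0) x ≤ L then (L:ℝ) else 0) := by
              intro k
              by_cases hgood : n k ≠ 0 ∧ G'.dist (st k 0) x ≤ L
              · rw [if_pos hgood]
                calc ∑ i ∈ Finset.range (n k),
                    (if st k i = x ∧ st k (i+1) = y then (1:ℝ) else 0)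
                    ≤ ∑ i ∈ Finset.range (n k), 1 := by
                      apply Finset.sum_le_sum; intro i _
                      split <;> norm_num
                  _ = (n k : ℝ) := by rw [Finset.sum_const, Finset.card_range, nsmul_eq_mul, mul_one]
                  _ ≤ (L : ℝ) := by exact_mod_cast hn k
              · rw [if_neg hgood]
                apply le_of_eq
                apply Finset.sum_eq_zero
                intro i hi
                rw [if_neg]
                intro ⟨h1, h2⟩
                apply hgood
                constructor
                · have hi' := Finset.mem_range.mp hi
                  omega
                · rw [← h1]
                  exact hdist k i (le_of_lt (Finset.mem_range.mp hi))
            calc ∑ k, ∑ i ∈ Finset.range (n k),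
                (if st k i = x ∧ st k (i+1) = y then (1:ℝ) else 0)
                ≤ ∑ k, (if n k ≠ 0 ∧ G'.dist (st k 0) x ≤ L then (L:ℝ) else 0) :=
                  Finset.sum_le_sum (fun k _ => hk k)
              _ = (L : ℝ) * (univ.filter (fun k => n k ≠ 0 ∧ G'.dist (st k 0) x ≤ L)).card := by
                  rw [Finset.sum_ite, Finset.sum_const, Finset.sum_const]
                  simp [mul_comm]
              _ ≤ (L : ℝ) * F := by
                  apply mul_le_mul_of_nonneg_left _ (Nat.cast_nonneg L)
                  exact_mod_cast hfib x
          calc ∑ k, ∑ i ∈ Finset.range (n k),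
              (f' x - f' y)^2 * (if st k i = x ∧ st k (i+1) = y then 1 else 0)
              = (f' x - f' y)^2 * ∑ k, ∑ i ∈ Finset.range (n k),
                  (if st k i = x ∧ st k (i+1) = y then (1:ℝ) else 0) := by
                rw [Finset.mul_sum]
                apply Finset.sum_congr rfl; intro k _
                rw [Finset.mul_sum]
            _ ≤ (f' x - f' y)^2 * ((L : ℝ) * F) :=
                mul_le_mul_of_nonneg_left hcount (sq_nonneg _)
        · push_neg at hex
          have : ∑ k, ∑ i ∈ Finset.range (n k),
              (if st k i = x then (if st k (i+1) = y then (f' x - f' y)^2 else 0) else 0) = 0 := by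
            apply Finset.sum_eq_zero; intro k _
            apply Finset.sum_eq_zero; intro i hi
            by_cases h1 : st k i = x
            · rw [if_pos h1, if_neg (hex k i hi h1)]
            · rw [if_neg h1]
          rw [this]
          positivity
    _ = (L : ℝ) * F * en G' f' := by
        unfold en
        rw [Finset.sum_congr rfl (fun x (_ : x ∈ univ) => (Finset.sum_mul _ _ _).symm),
          ← Finset.sum_mul]
        ring

section DegPos

variable [Fintype V] [DecidableEq V] (G : SimpleGraph V) [DecidableRel G.Adj]

lemma degree_pos_of_connected (hconn : G.Connected) (h2 : 1 < Fintype.card V) (v : V) :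
    0 < G.degree v := by
  obtain ⟨u, hu⟩ := Fintype.exists_ne_of_one_lt_card h2 v
  have hd : G.dist v u ≠ 0 := fun h => hu ((hconn.dist_eq_zero_iff).mp h).symm
  obtain ⟨p, hp⟩ := hconn.exists_walk_length_eq_dist v u
  have hlen : 0 < p.length := by omega
  have hadj := p.adj_getVert_succ hlen
  rw [p.getVert_zero] at hadj
  exact G.degree_pos_iff_exists_adj v |>.mpr ⟨_, hadj⟩

end DegPos

lemma sq_add_le (x y c : ℝ) : (x - c)^2 ≤ 2*(x-y)^2 + 2*(y-c)^2 := by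
  nlinarith [sq_nonneg ((x-y)-(y-c))]

set_option maxHeartbeats 2000000 in
lemma key_direction (a b : ℝ) (d : ℕ) (ha : 1 ≤ a) (hb : 0 ≤ b) :
    ∃ C : ℝ, 0 < C ∧
      ∀ (V V' : Type) [Fintype V] [Fintype V'] [DecidableEq V] [DecidableEq V']
        (G : SimpleGraph V) (G' : SimpleGraph V')
        [DecidableRel G.Adj] [DecidableRel G'.Adj],
        G.Connected → G'.Connected →
        (∀ v : V, G.degree v ≤ d) → (∀ v : V', G'.degree v ≤ d) →
        ∀ ψ : V → V', IsGraphQuasiIsometry G G' a b ψ →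
        ∀ γ γ' : ℝ, IsLazySpectralGap G γ → IsLazySpectralGap G' γ' →
          γ ≤ C * γ' := by
  classical
  set L : ℕ := ⌊a + b⌋₊ with hLdef
  set Rn : ℕ := ⌊a * (2*L + b)⌋₊ with hRndef
  set F₁ : ℕ := d * (d+1)^Rn with hF₁def
  set F₂ : ℕ := (d+1)^(2*L) with hF₂def
  set K₁ : ℝ := (L:ℝ)^2 * F₁ with hK₁def
  set K₃ : ℝ := 8*d*(L:ℝ)^2*F₂ with hK₃def
  set K₄ : ℝ := 2*d*(F₂:ℝ) with hK₄def
  have hK₁0 : 0 ≤ K₁ := by positivity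
  have hK₃0 : 0 ≤ K₃ := by positivity
  have hK₄0 : 0 ≤ K₄ := by positivity
  refine ⟨2 + 3*K₃ + 2*K₁*K₄, by positivity, ?_⟩
  intro V V' _ _ _ _ G G' _ _ hconn hconn' hdeg hdeg' ψ hQI γ γ' hγ hγ'
  set C : ℝ := 2 + 3*K₃ + 2*K₁*K₄ with hCdef
  haveI hneV : Nonempty V := gap_nonempty G hγ
  haveI hneV' : Nonempty V' := gap_nonempty G' hγ'
  obtain ⟨hγpos, hγ1⟩ := gap_pos_le_one G hγ
  obtain ⟨hγ'pos, hγ'1⟩ := gap_pos_le_one G' hγ'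
  have hL1 : 1 ≤ L := by
    apply Nat.le_floor
    push_cast
    linarith
  -- trivial case: V' is a single vertex
  by_cases hcard' : Fintype.card V' = 1
  · obtain ⟨v', hv'⟩ := Fintype.card_eq_one_iff.mp hcard'
    have hγ'half : γ' = 1/2 := by
      obtain ⟨⟨hne1, f, hf0, heig⟩, -⟩ := hγ'
      have hsum : ∀ g : V' → ℝ, ∑ u, g u = g v' := by
        intro g
        rw [show (univ : Finset V') = {v'} from
          Finset.eq_singleton_iff_unique_mem.mpr ⟨mem_univ _, fun y _ => hv' y⟩,
          Finset.sum_singleton]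
      have h1 := heig v'
      rw [hsum (fun u => lazyWalkMatrix G' v' u * f u)] at h1
      have h2 : lazyWalkMatrix G' v' v' = 1/2 := by
        unfold lazyWalkMatrix; rw [if_pos rfl]
      rw [h2] at h1
      have hfv' : f v' ≠ 0 := by
        intro h
        apply hf0
        funext u
        rw [hv' u, h]; rfl
      have := mul_right_cancel₀ hfv' h1
      linarith
    rw [hγ'half]
    have : 2 * (1/2 : ℝ) = 1 := by norm_num
    calc γ ≤ 1 := hγ1
      _ ≤ C * (1/2) := by rw [hCdef]; nlinarith
  -- main case
  have hcard2' : 1 < Fintype.card V' := by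
    have := Fintype.card_pos (α := V')
    omega
  have hdegpos' : ∀ y : V', 0 < G'.degree y :=
    degree_pos_of_connected G' hconn' hcard2'
  have hd1 : 1 ≤ d := by
    obtain ⟨y⟩ := hneV'
    have := hdegpos' y
    have := hdeg' y
    omega
  have hF₂pos : 0 < F₂ := by rw [hF₂def]; positivity
  have hdR : (0:ℝ) < (d:ℝ) := by exact_mod_cast hd1
  have hLR : (0:ℝ) < (L:ℝ) := by exact_mod_cast hL1
  have hF₂R : (0:ℝ) < (F₂:ℝ) := by exact_mod_cast hF₂pos
  have hK₃pos : 0 < K₃ := by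
    rw [hK₃def]; positivity
  have hK₄pos : 0 < K₄ := by
    rw [hK₄def]; positivity
  -- eigenfunction on G'
  obtain ⟨f', hf'0, heig', hmean', hen'⟩ := gap_eigen G' hγ'
  set S' : ℝ := ∑ y, (G'.degree y : ℝ) * (f' y)^2 with hS'def
  have hS'pos : 0 < S' := by
    obtain ⟨y₀, hy₀⟩ := Function.ne_iff.mp hf'0
    apply Finset.sum_pos'
    · intro y _
      positivity
    · refine ⟨y₀, mem_univ _, ?_⟩
      have h1 : 0 < (G'.degree y₀ : ℝ) := by exact_mod_cast hdegpos' y₀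
      have h2 : 0 < (f' y₀)^2 :=
        lt_of_le_of_ne (sq_nonneg _) (Ne.symm (pow_ne_zero 2 hy₀))
      exact mul_pos h1 h2
  -- choose geodesics and coarse inverse
  choose pick hpick using fun x y : V' => hconn'.exists_walk_length_eq_dist x y
  choose φ hφ using hQI.2
  set f : V → ℝ := fun v => f' (ψ v) with hfdef
  -- Claim I : en G f ≤ K₁ * en G' f'
  have claimI : en G f ≤ K₁ * en G' f' := by
    set n : V × V → ℕ := fun k => if G.Adj k.1 k.2 then G'.dist (ψ k.1) (ψ k.2) else 0 with hndef
    set st : V × V → ℕ → V' := fun k i => (pick (ψ k.1) (ψ k.2)).getVert i with hstdef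
    have hst0 : ∀ k, st k 0 = ψ k.1 := fun k => (pick _ _).getVert_zero
    have hn : ∀ k, n k ≤ L := by
      intro k
      simp only [hndef]
      by_cases hA : G.Adj k.1 k.2
      · rw [if_pos hA]
        apply Nat.le_floor
        have h1 := (hQI.1 k.1 k.2).2
        have h2 : G.dist k.1 k.2 = 1 := SimpleGraph.dist_eq_one_iff_adj.mpr hA
        rw [h2] at h1
        push_cast at h1 ⊢
        nlinarith
      · rw [if_neg hA]; omega
    have hlen : ∀ k, G.Adj k.1 k.2 → (pick (ψ k.1) (ψ k.2)).length = n k := by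
      intro k hA
      simp only [hndef]; rw [if_pos hA]
      exact hpick _ _
    have hadj : ∀ k i, i < n k → G'.Adj (st k i) (st k (i+1)) := by
      intro k i hi
      have hA : G.Adj k.1 k.2 := by
        by_contra hA
        simp only [hndef] at hi
        simp [hA] at hi
      exact (pick (ψ k.1) (ψ k.2)).adj_getVert_succ (by rw [hlen k hA]; exact hi)
    have hdist : ∀ k i, i ≤ n k → G'.dist (st k 0) (st k i) ≤ L := by
      intro k i hi
      rw [hst0]
      calc G'.dist (ψ k.1) (st k i) ≤ i := by
            simp only [hstdef]
            exact dist_getVert_le G' hconn' (pick (ψ k.1) (ψ k.2)) i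
        _ ≤ L := le_trans hi (hn k)
    have hfib : ∀ x : V',
        (univ.filter (fun k => n k ≠ 0 ∧ G'.dist (st k 0) x ≤ L)).card ≤ F₁ := by
      intro x
      set T : Finset V := univ.filter (fun u => G'.dist (ψ u) x ≤ L) with hTdef
      have hsub : univ.filter (fun k : V × V => n k ≠ 0 ∧ G'.dist (st k 0) x ≤ L)
          ⊆ T.biUnion (fun u => {u} ×ˢ G.neighborFinset u) := by
        intro k hk
        rw [Finset.mem_filter] at hk
        obtain ⟨-, hk1, hk2⟩ := hk
        have hA : G.Adj k.1 k.2 := by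
          by_contra hA
          simp only [hndef] at hk1
          simp [hA] at hk1
        rw [hst0] at hk2
        apply Finset.mem_biUnion.mpr
        refine ⟨k.1, Finset.mem_filter.mpr ⟨mem_univ _, hk2⟩, ?_⟩
        rw [Finset.mem_product, Finset.mem_singleton, SimpleGraph.mem_neighborFinset]
        exact ⟨rfl, hA⟩
      have hTcard : T.card ≤ (d+1)^Rn := by
        rcases Finset.eq_empty_or_nonempty T with hT | ⟨u₀, hu₀⟩
        · rw [hT]; simp
        · have hTsub : T ⊆ univ.filter (fun v => G.dist u₀ v ≤ Rn) := by
            intro u hu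
            rw [hTdef, Finset.mem_filter] at hu
            rw [Finset.mem_filter]
            refine ⟨mem_univ _, ?_⟩
            have hu₀' := (Finset.mem_filter.mp hu₀).2
            have htri : G'.dist (ψ u) (ψ u₀) ≤ 2*L :=
              calc G'.dist (ψ u) (ψ u₀) ≤ G'.dist (ψ u) x + G'.dist x (ψ u₀) :=
                    hconn'.dist_triangle
                _ ≤ L + L := by
                    have := hu.2
                    have h2 : G'.dist x (ψ u₀) ≤ L := by rwa [SimpleGraph.dist_comm]
                    omega
                _ = 2*L := by ring
            have hlow := (hQI.1 u u₀).1
            have hcast : (G'.dist (ψ u) (ψ u₀) : ℝ) ≤ 2*L := by exact_mod_cast htri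
            have h3 : a⁻¹ * (G.dist u u₀ : ℝ) - b ≤ 2*L := le_trans hlow hcast
            have hapos : (0:ℝ) < a := lt_of_lt_of_le one_pos ha
            have h4 : (G.dist u u₀ : ℝ) ≤ a * (2*L + b) := by
              have h5 : a⁻¹ * (G.dist u u₀ : ℝ) ≤ 2*L + b := by linarith
              calc (G.dist u u₀ : ℝ) = a * (a⁻¹ * (G.dist u u₀ : ℝ)) := by
                    field_simp
                _ ≤ a * (2*L + b) := by
                    apply mul_le_mul_of_nonneg_left h5 (le_of_lt hapos)
            rw [SimpleGraph.dist_comm] at h4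
            apply Nat.le_floor
            exact h4
          calc T.card ≤ _ := Finset.card_le_card hTsub
            _ ≤ (d+1)^Rn := ball_card G hconn d hdeg u₀ Rn
      calc (univ.filter (fun k : V × V => n k ≠ 0 ∧ G'.dist (st k 0) x ≤ L)).card
          ≤ (T.biUnion (fun u => {u} ×ˢ G.neighborFinset u)).card := Finset.card_le_card hsub
        _ ≤ ∑ u ∈ T, ({u} ×ˢ G.neighborFinset u).card := Finset.card_biUnion_le
        _ ≤ ∑ _u ∈ T, d := by
            apply Finset.sum_le_sum
            intro u _
            rw [Finset.card_product, Finset.card_singleton, one_mul,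
              SimpleGraph.card_neighborFinset_eq_degree]
            exact hdeg u
        _ = T.card * d := by rw [Finset.sum_const, smul_eq_mul]
        _ ≤ (d+1)^Rn * d := Nat.mul_le_mul_right _ hTcard
        _ = F₁ := by rw [hF₁def]; ring
    have hpc := path_counting G' f' L F₁ n st hn hadj hdist hfib
    have hen_eq : en G f = ∑ k : V × V, (if G.Adj k.1 k.2 then (f k.1 - f k.2)^2 else 0) := by
      unfold en
      rw [Fintype.sum_prod_type]
    have hterm : ∀ k : V × V, (if G.Adj k.1 k.2 then (f k.1 - f k.2)^2 else 0)
        ≤ (L:ℝ) * ∑ i ∈ Finset.range (n k), (f' (st k i) - f' (st k (i+1)))^2 := by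
      intro k
      by_cases hA : G.Adj k.1 k.2
      · rw [if_pos hA]
        have htel := telescope_sq G' f' (pick (ψ k.1) (ψ k.2))
        rw [hlen k hA] at htel
        calc (f k.1 - f k.2)^2
            = (f' (ψ k.1) - f' (ψ k.2))^2 := rfl
          _ ≤ (n k : ℝ) * ∑ i ∈ Finset.range (n k), (f' (st k i) - f' (st k (i+1)))^2 := htel
          _ ≤ (L:ℝ) * ∑ i ∈ Finset.range (n k), (f' (st k i) - f' (st k (i+1)))^2 := by
              apply mul_le_mul_of_nonneg_right
              · exact_mod_cast hn k
              · apply Finset.sum_nonneg; intro i _; positivity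
      · rw [if_neg hA]
        positivity
    calc en G f = ∑ k : V × V, (if G.Adj k.1 k.2 then (f k.1 - f k.2)^2 else 0) := hen_eq
      _ ≤ ∑ k : V × V, (L:ℝ) * ∑ i ∈ Finset.range (n k), (f' (st k i) - f' (st k (i+1)))^2 :=
          Finset.sum_le_sum (fun k _ => hterm k)
      _ = (L:ℝ) * ∑ k : V × V, ∑ i ∈ Finset.range (n k), (f' (st k i) - f' (st k (i+1)))^2 := by
          rw [Finset.mul_sum]
      _ ≤ (L:ℝ) * ((L:ℝ) * F₁ * en G' f') := by
          apply mul_le_mul_of_nonneg_left hpc (Nat.cast_nonneg L)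
      _ = K₁ * en G' f' := by rw [hK₁def]; ring
  -- Claim II : variance transfer
  have claimII : ∀ c : ℝ, S' ≤ K₃ * γ' * S' + K₄ * ∑ x : V, (f x - c)^2 := by
    intro c
    set n2 : V' → ℕ := fun y => G'.dist (ψ (φ y)) y with hn2def
    set st2 : V' → ℕ → V' := fun y i => (pick (ψ (φ y)) y).getVert i with hst2def
    have hst20 : ∀ y, st2 y 0 = ψ (φ y) := fun y => (pick _ _).getVert_zero
    have hn2L : ∀ y, n2 y ≤ L := by
      intro y
      apply Nat.le_floor
      exact hφ y
    have hlen2 : ∀ y, (pick (ψ (φ y)) y).length = n2 y := fun y => hpick _ _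
    have hadj2 : ∀ y i, i < n2 y → G'.Adj (st2 y i) (st2 y (i+1)) := by
      intro y i hi
      exact (pick (ψ (φ y)) y).adj_getVert_succ (by rw [hlen2 y]; exact hi)
    have hdist2 : ∀ y i, i ≤ n2 y → G'.dist (st2 y 0) (st2 y i) ≤ L := by
      intro y i hi
      rw [hst20]
      calc G'.dist (ψ (φ y)) (st2 y i) ≤ i := by
            simp only [hst2def]
            exact dist_getVert_le G' hconn' (pick (ψ (φ y)) y) i
        _ ≤ L := le_trans hi (hn2L y)
    have hfib2 : ∀ x : V',
        (univ.filter (fun y => n2 y ≠ 0 ∧ G'.dist (st2 y 0) x ≤ L)).card ≤ F₂ := by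
      intro x
      have hsub : univ.filter (fun y => n2 y ≠ 0 ∧ G'.dist (st2 y 0) x ≤ L)
          ⊆ univ.filter (fun y => G'.dist x y ≤ 2*L) := by
        intro y hy
        rw [Finset.mem_filter] at hy ⊢
        obtain ⟨-, -, hy2⟩ := hy
        rw [hst20] at hy2
        refine ⟨mem_univ _, ?_⟩
        calc G'.dist x y ≤ G'.dist x (ψ (φ y)) + G'.dist (ψ (φ y)) y := hconn'.dist_triangle
          _ ≤ L + L := by
              have h1 : G'.dist x (ψ (φ y)) ≤ L := by rwa [SimpleGraph.dist_comm]
              have h2 := hn2L y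
              simp only [hn2def] at h2
              omega
          _ = 2*L := by ring
      calc _ ≤ (univ.filter (fun y => G'.dist x y ≤ 2*L)).card := Finset.card_le_card hsub
        _ ≤ (d+1)^(2*L) := ball_card G' hconn' d hdeg' x (2*L)
        _ = F₂ := by rw [hF₂def]
    have hpc2 := path_counting G' f' L F₂ n2 st2 hn2L hadj2 hdist2 hfib2
    -- fiber bound for φ
    have hfibφ : ∀ x : V, (univ.filter (fun y => φ y = x)).card ≤ F₂ := by
      intro x
      have hsub : univ.filter (fun y => φ y = x)
          ⊆ univ.filter (fun y => G'.dist (ψ x) y ≤ 2*L) := by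
        intro y hy
        rw [Finset.mem_filter] at hy ⊢
        refine ⟨mem_univ _, ?_⟩
        have h1 : G'.dist (ψ (φ y)) y ≤ L := by
          apply Nat.le_floor
          exact hφ y
        rw [hy.2] at h1
        omega
      calc _ ≤ _ := Finset.card_le_card hsub
        _ ≤ (d+1)^(2*L) := ball_card G' hconn' d hdeg' (ψ x) (2*L)
        _ = F₂ := by rw [hF₂def]
    have hcomp := comp_sum_le φ (fun x => (f x - c)^2) (fun x => sq_nonneg _) F₂ hfibφ
    -- telescoping for each y
    have htel2 : ∀ y : V', (f' (ψ (φ y)) - f' y)^2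
        ≤ (L:ℝ) * ∑ i ∈ Finset.range (n2 y), (f' (st2 y i) - f' (st2 y (i+1)))^2 := by
      intro y
      have htel := telescope_sq G' f' (pick (ψ (φ y)) y)
      rw [hlen2 y] at htel
      calc (f' (ψ (φ y)) - f' y)^2
          ≤ (n2 y : ℝ) * ∑ i ∈ Finset.range (n2 y), (f' (st2 y i) - f' (st2 y (i+1)))^2 := htel
        _ ≤ (L:ℝ) * ∑ i ∈ Finset.range (n2 y), (f' (st2 y i) - f' (st2 y (i+1)))^2 := by
            apply mul_le_mul_of_nonneg_right
            · exact_mod_cast hn2L y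
            · apply Finset.sum_nonneg; intro i _; positivity
    have hen4 : en G' f' = 4 * γ' * S' := by
      rw [hS'def]; linarith [hen']
    have step1 : S' ≤ ∑ y, (G'.degree y : ℝ) * (f' y - c)^2 := by
      have hexp : ∑ y, (G'.degree y : ℝ) * (f' y - c)^2
          = (S' + c^2 * ∑ y, (G'.degree y : ℝ)) - 2*c*(∑ y, (G'.degree y : ℝ) * f' y) := by
        rw [hS'def, Finset.mul_sum, Finset.mul_sum,
          ← Finset.sum_add_distrib, ← Finset.sum_sub_distrib]
        apply Finset.sum_congr rfl; intro y _; ring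
      rw [hexp, hmean', mul_zero, sub_zero]
      have : 0 ≤ c^2 * ∑ y, (G'.degree y : ℝ) := by
        apply mul_nonneg (sq_nonneg _)
        apply Finset.sum_nonneg; intro y _; positivity
      linarith
    have step2 : ∑ y, (G'.degree y : ℝ) * (f' y - c)^2
        ≤ (d:ℝ) * ∑ y, (f' y - c)^2 := by
      rw [Finset.mul_sum]
      apply Finset.sum_le_sum; intro y _
      apply mul_le_mul_of_nonneg_right _ (sq_nonneg _)
      exact_mod_cast hdeg' y
    have step3 : ∑ y, (f' y - c)^2
        ≤ 2 * ∑ y, (f' y - f' (ψ (φ y)))^2 + 2 * ∑ y, (f' (ψ (φ y)) - c)^2 := by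
      rw [Finset.mul_sum, Finset.mul_sum, ← Finset.sum_add_distrib]
      apply Finset.sum_le_sum; intro y _
      have := sq_add_le (f' y) (f' (ψ (φ y))) c
      linarith
    have step4 : ∑ y, (f' y - f' (ψ (φ y)))^2 ≤ (L:ℝ) * ((L:ℝ) * F₂ * en G' f') := by
      calc ∑ y, (f' y - f' (ψ (φ y)))^2
          = ∑ y, (f' (ψ (φ y)) - f' y)^2 := by
            apply Finset.sum_congr rfl; intro y _; ring
        _ ≤ ∑ y, (L:ℝ) * ∑ i ∈ Finset.range (n2 y), (f' (st2 y i) - f' (st2 y (i+1)))^2 :=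
            Finset.sum_le_sum (fun y _ => htel2 y)
        _ = (L:ℝ) * ∑ y, ∑ i ∈ Finset.range (n2 y), (f' (st2 y i) - f' (st2 y (i+1)))^2 := by
            rw [Finset.mul_sum]
        _ ≤ (L:ℝ) * ((L:ℝ) * F₂ * en G' f') :=
            mul_le_mul_of_nonneg_left hpc2 (Nat.cast_nonneg L)
    have step5 : ∑ y, (f' (ψ (φ y)) - c)^2 ≤ (F₂:ℝ) * ∑ x : V, (f x - c)^2 := hcomp
    calc S' ≤ ∑ y, (G'.degree y : ℝ) * (f' y - c)^2 := step1
      _ ≤ (d:ℝ) * ∑ y, (f' y - c)^2 := step2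
      _ ≤ (d:ℝ) * (2 * ∑ y, (f' y - f' (ψ (φ y)))^2 + 2 * ∑ y, (f' (ψ (φ y)) - c)^2) := by
          apply mul_le_mul_of_nonneg_left step3 (Nat.cast_nonneg d)
      _ ≤ (d:ℝ) * (2 * ((L:ℝ) * ((L:ℝ) * F₂ * en G' f')) + 2 * ((F₂:ℝ) * ∑ x : V, (f x - c)^2)) := by
          apply mul_le_mul_of_nonneg_left _ (Nat.cast_nonneg d)
          have h4 := step4
          have h5 := step5
          linarith
      _ = K₃ * γ' * S' + K₄ * ∑ x : V, (f x - c)^2 := by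
          rw [hen4, hK₃def, hK₄def]
          ring
  -- now split on the size of V
  by_cases hcardV : Fintype.card V = 1
  · obtain ⟨x₀, hx₀⟩ := Fintype.card_eq_one_iff.mp hcardV
    have hSig : ∑ x : V, (f x - f x₀)^2 = 0 := by
      apply Finset.sum_eq_zero
      intro x _
      rw [hx₀ x]
      ring
    have h1 := claimII (f x₀)
    rw [hSig, mul_zero, add_zero] at h1
    have h2 : 1 ≤ K₃ * γ' := by
      by_contra h2
      push_neg at h2
      nlinarith
    calc γ ≤ 1 := hγ1
      _ ≤ K₃ * γ' := h2
      _ ≤ C * γ' := by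
          apply mul_le_mul_of_nonneg_right _ (le_of_lt hγ'pos)
          rw [hCdef]
          nlinarith
  · have hcard2 : 1 < Fintype.card V := by
      have := Fintype.card_pos (α := V)
      omega
    have hdegpos : ∀ v : V, 0 < G.degree v := degree_pos_of_connected G hconn hcard2
    set Wd : ℝ := ∑ v, (G.degree v : ℝ) with hWddef
    have hWdpos : 0 < Wd := by
      apply Finset.sum_pos'
      · intro v _; positivity
      · obtain ⟨v⟩ := hneV
        exact ⟨v, mem_univ _, by exact_mod_cast hdegpos v⟩
    set c : ℝ := (∑ v, (G.degree v : ℝ) * f v) / Wd with hcdef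
    set g : V → ℝ := fun v => f v - c with hgdef
    have hmeang : ∑ v, (G.degree v : ℝ) * g v = 0 := by
      rw [hgdef]
      have : ∀ v : V, (G.degree v : ℝ) * (f v - c)
          = (G.degree v : ℝ) * f v - c * (G.degree v : ℝ) := by intro v; ring
      rw [Finset.sum_congr rfl (fun v _ => this v), Finset.sum_sub_distrib, ← Finset.mul_sum]
      rw [hcdef]
      field_simp
      rw [hWddef]; ring
    have hray := rayleigh_bound G hconn hγ hdegpos g hmeang
    set S : ℝ := ∑ v, (G.degree v : ℝ) * (g v)^2 with hSdef
    have heng : en G g = en G f := en_shift G f c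
    have hSigS : ∑ x : V, (f x - c)^2 ≤ S := by
      rw [hSdef]
      apply Finset.sum_le_sum
      intro v _
      have h1 : (1:ℝ) ≤ (G.degree v : ℝ) := by exact_mod_cast hdegpos v
      have h2 : (f v - c)^2 = g v ^2 := by rw [hgdef]
      rw [h2]
      nlinarith [sq_nonneg (g v)]
    have hchain : γ * S ≤ K₁ * γ' * S' := by
      calc γ * S ≤ (1/4) * en G g := hray
        _ = (1/4) * en G f := by rw [heng]
        _ ≤ (1/4) * (K₁ * en G' f') := by
            apply mul_le_mul_of_nonneg_left claimI (by norm_num)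
        _ = K₁ * ((1/4) * en G' f') := by ring
        _ = K₁ * (γ' * S') := by rw [hen']
        _ = K₁ * γ' * S' := by ring
    by_cases hsmall : γ' ≤ 1 / (2*K₃)
    · have h1 := claimII c
      have h2' : γ' * (2*K₃) ≤ 1 := (le_div_iff₀ (by positivity)).mp hsmall
      have h2 : K₃ * γ' ≤ 1/2 := by nlinarith
      have h3 : S' ≤ 2 * K₄ * S := by
        have h4 : K₃ * γ' * S' ≤ (1/2) * S' := by nlinarith
        have h5 := le_trans hSigS (le_refl S)
        nlinarith [claimII c, hSigS, mul_le_mul_of_nonneg_left hSigS hK₄0]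
      have hSpos : 0 < S := by
        by_contra hS
        push_neg at hS
        nlinarith
      have h6 : γ * S ≤ 2 * K₁ * K₄ * γ' * S := by
        calc γ * S ≤ K₁ * γ' * S' := hchain
          _ ≤ K₁ * γ' * (2 * K₄ * S) := by
              apply mul_le_mul_of_nonneg_left h3
              positivity
          _ = 2 * K₁ * K₄ * γ' * S := by ring
      have h7 : γ ≤ 2 * K₁ * K₄ * γ' := le_of_mul_le_mul_right (by nlinarith) hSpos
      calc γ ≤ 2 * K₁ * K₄ * γ' := h7
        _ ≤ C * γ' := by
            apply mul_le_mul_of_nonneg_right _ (le_of_lt hγ'pos)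
            rw [hCdef]
            nlinarith
    · push_neg at hsmall
      have h1' : 1 < γ' * (2*K₃) := (div_lt_iff₀ (by positivity)).mp hsmall
      have h1 : 1 < 2 * K₃ * γ' := by nlinarith
      calc γ ≤ 1 := hγ1
        _ ≤ 2 * K₃ * γ' := le_of_lt h1
        _ ≤ C * γ' := by
            apply mul_le_mul_of_nonneg_right _ (le_of_lt hγ'pos)
            rw [hCdef]
            nlinarith


/-- If two finite connected graphs with maximum degree at most `d` are `(a,b)`
quasi-isometric, then the ratio of the spectral gaps of their lazy simple random walks is
bounded above and below by positive constants depending only on `a`, `b` and `d`. -/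
theorem quasi_isometry_spectral_gap_comparison
    (a b : ℝ) (d : ℕ) (ha : 1 ≤ a) (hb : 0 ≤ b) :
    ∃ c C : ℝ, 0 < c ∧ 0 < C ∧
      ∀ (V V' : Type) [Fintype V] [Fintype V'] [DecidableEq V] [DecidableEq V']
        (G : SimpleGraph V) (G' : SimpleGraph V')
        [DecidableRel G.Adj] [DecidableRel G'.Adj],
        G.Connected → G'.Connected →
        (∀ v : V, G.degree v ≤ d) → (∀ v : V', G'.degree v ≤ d) →
        ∀ ψ : V → V', IsGraphQuasiIsometry G G' a b ψ →
        ∀ γ γ' : ℝ, IsLazySpectralGap G γ → IsLazySpectralGap G' γ' →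
          c * γ' ≤ γ ∧ γ ≤ C * γ' := by
  have hapos : (0:ℝ) < a := lt_of_lt_of_le one_pos ha
  obtain ⟨C₁, hC₁pos, hC₁⟩ := key_direction a b d ha hb
  obtain ⟨C₂, hC₂pos, hC₂⟩ := key_direction a (a*(2*a+3*b)) d ha (by nlinarith)
  refine ⟨C₂⁻¹, C₁, inv_pos.mpr hC₂pos, hC₁pos, ?_⟩
  intro V V' _ _ _ _ G G' _ _ hconn hconn' hdeg hdeg' ψ hQI γ γ' hγ hγ'
  constructor
  · -- lower bound via the coarse inverse
    choose φ hφ using hQI.2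
    have hQI' : IsGraphQuasiIsometry G' G a (a*(2*a+3*b)) φ := by
      constructor
      · intro y₁ y₂
        have h1 := hφ y₁
        have h2 := hφ y₂
        have hlow := (hQI.1 (φ y₁) (φ y₂)).1
        have hupp := (hQI.1 (φ y₁) (φ y₂)).2
        have htri1 : (G'.dist (ψ (φ y₁)) (ψ (φ y₂)) : ℝ)
            ≤ (G'.dist (ψ (φ y₁)) y₁ : ℝ) + (G'.dist y₁ y₂ : ℝ) + (G'.dist y₂ (ψ (φ y₂)) : ℝ) := by
          have t1 : G'.dist (ψ (φ y₁)) (ψ (φ y₂)) ≤ G'.dist (ψ (φ y₁)) y₂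
              + G'.dist y₂ (ψ (φ y₂)) := hconn'.dist_triangle
          have t2 : G'.dist (ψ (φ y₁)) y₂ ≤ G'.dist (ψ (φ y₁)) y₁ + G'.dist y₁ y₂ :=
            hconn'.dist_triangle
          push_cast
          exact_mod_cast le_trans (Nat.cast_le.mpr t1)
            (by exact_mod_cast add_le_add_left (Nat.cast_le.mpr t2) _)
        have htri2 : (G'.dist y₁ y₂ : ℝ)
            ≤ (G'.dist y₁ (ψ (φ y₁)) : ℝ) + (G'.dist (ψ (φ y₁)) (ψ (φ y₂)) : ℝ)
              + (G'.dist (ψ (φ y₂)) y₂ : ℝ) := by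
          have t1 : G'.dist y₁ y₂ ≤ G'.dist y₁ (ψ (φ y₂)) + G'.dist (ψ (φ y₂)) y₂ :=
            hconn'.dist_triangle
          have t2 : G'.dist y₁ (ψ (φ y₂)) ≤ G'.dist y₁ (ψ (φ y₁))
              + G'.dist (ψ (φ y₁)) (ψ (φ y₂)) := hconn'.dist_triangle
          exact_mod_cast le_trans (Nat.cast_le.mpr t1)
            (by exact_mod_cast add_le_add_left (Nat.cast_le.mpr t2) _)
        have hc1 : (G'.dist (ψ (φ y₁)) y₁ : ℝ) = (G'.dist y₁ (ψ (φ y₁)) : ℝ) := by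
          rw [SimpleGraph.dist_comm]
        have hc2 : (G'.dist (ψ (φ y₂)) y₂ : ℝ) = (G'.dist y₂ (ψ (φ y₂)) : ℝ) := by
          rw [SimpleGraph.dist_comm]
        have hainv : a⁻¹ ≤ 1 := by
          rw [inv_le_one_iff₀]
          right; exact ha
        have hainvpos : 0 < a⁻¹ := inv_pos.mpr hapos
        have hdnn : (0:ℝ) ≤ (G.dist (φ y₁) (φ y₂) : ℝ) := Nat.cast_nonneg _
        have hdnn' : (0:ℝ) ≤ (G'.dist y₁ y₂ : ℝ) := Nat.cast_nonneg _
        constructor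
        · -- a⁻¹ * dist' - b' ≤ dist
          have key : (G'.dist y₁ y₂ : ℝ) ≤ a * (G.dist (φ y₁) (φ y₂) : ℝ) + (2*a + 3*b) := by
            have := htri2
            rw [← hc1, hc2] at this
            linarith [h1, h2, hupp]
          have e1 : a⁻¹ * (a * (G.dist (φ y₁) (φ y₂) : ℝ)) = (G.dist (φ y₁) (φ y₂) : ℝ) := by
            field_simp
          have e2 : a⁻¹ * (G'.dist y₁ y₂ : ℝ)
              ≤ (G.dist (φ y₁) (φ y₂) : ℝ) + a⁻¹ * (2*a + 3*b) := by
            calc a⁻¹ * (G'.dist y₁ y₂ : ℝ)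
                ≤ a⁻¹ * (a * (G.dist (φ y₁) (φ y₂) : ℝ) + (2*a + 3*b)) :=
                  mul_le_mul_of_nonneg_left key (le_of_lt hainvpos)
              _ = a⁻¹ * (a * (G.dist (φ y₁) (φ y₂) : ℝ)) + a⁻¹ * (2*a + 3*b) := by ring
              _ = (G.dist (φ y₁) (φ y₂) : ℝ) + a⁻¹ * (2*a + 3*b) := by rw [e1]
          have e3 : a⁻¹ * (2*a + 3*b) ≤ 2*a + 3*b := by
            apply mul_le_of_le_one_left _ hainv
            nlinarith
          have e4 : 2*a + 3*b ≤ a*(2*a+3*b) := by nlinarith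
          linarith
        · -- dist ≤ a * dist' + b'
          have key : a⁻¹ * (G.dist (φ y₁) (φ y₂) : ℝ)
              ≤ (G'.dist y₁ y₂ : ℝ) + (2*a + 2*b + b) := by
            have := htri1
            rw [hc1, ← hc2] at this
            have hcc1 : (G'.dist y₁ (ψ (φ y₁)) : ℝ) ≤ a + b := by
              rw [SimpleGraph.dist_comm]; exact h1
            linarith [hlow, h2]
          have e1 : (G.dist (φ y₁) (φ y₂) : ℝ) = a * (a⁻¹ * (G.dist (φ y₁) (φ y₂) : ℝ)) := by
            field_simp
          calc (G.dist (φ y₁) (φ y₂) : ℝ)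
              = a * (a⁻¹ * (G.dist (φ y₁) (φ y₂) : ℝ)) := e1
            _ ≤ a * ((G'.dist y₁ y₂ : ℝ) + (2*a + 2*b + b)) :=
                mul_le_mul_of_nonneg_left key (le_of_lt hapos)
            _ = a * (G'.dist y₁ y₂ : ℝ) + a*(2*a+3*b) := by ring
      · intro x
        refine ⟨ψ x, ?_⟩
        have h1 := hφ (ψ x)
        have hlow := (hQI.1 (φ (ψ x)) x).1
        have hainvpos : 0 < a⁻¹ := inv_pos.mpr hapos
        have key : a⁻¹ * (G.dist (φ (ψ x)) x : ℝ) ≤ a + 2*b := by linarith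
        have e1 : (G.dist (φ (ψ x)) x : ℝ) = a * (a⁻¹ * (G.dist (φ (ψ x)) x : ℝ)) := by
          field_simp
        calc (G.dist (φ (ψ x)) x : ℝ)
            = a * (a⁻¹ * (G.dist (φ (ψ x)) x : ℝ)) := e1
          _ ≤ a * (a + 2*b) := mul_le_mul_of_nonneg_left key (le_of_lt hapos)
          _ ≤ a + a*(2*a+3*b) := by nlinarith
    have h := hC₂ V' V G' G hconn' hconn hdeg' hdeg φ hQI' γ' γ hγ' hγ
    calc C₂⁻¹ * γ' ≤ C₂⁻¹ * (C₂ * γ) := by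
          apply mul_le_mul_of_nonneg_left h (le_of_lt (inv_pos.mpr hC₂pos))
      _ = γ := by field_simp
  · exact hC₁ V V' G G' hconn hconn' hdeg hdeg' ψ hQI γ γ' hγ hγ'
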